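/- Let Γ be a connected graph that is a Barycentric refinement of a one-dimensional complex with at least one edge. Then the largest eigenvalue of the Kirchhoff Laplacian H0 of Γ has multiplicity 1. -/

import Mathlib

open Matrix

private lemma rayleigh_bound' {n : Type*} [Fintype n] [DecidableEq n] {Q : Matrix n n ℝ}
    (hQ : Q.IsHermitian) {μ : ℝ} (hμ : ∀ i, hQ.eigenvalues i ≤ μ) (x : n → ℝ) :
    x ⬝ᵥ Q *ᵥ x ≤ μ * (x ⬝ᵥ x) := by
  set U : Matrix n n ℝ := (hQ.eigenvectorUnitary : Matrix n n ℝ) with hU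
  have hUU : U * star U = 1 := (Matrix.mem_unitaryGroup_iff).mp hQ.eigenvectorUnitary.2
  have hsU : star U = Uᵀ := by
    ext i j
    simp [Matrix.star_eq_conjTranspose, Matrix.conjTranspose_apply]
  have hUT : (star U)ᵀ = U := by rw [hsU, Matrix.transpose_transpose]
  set y : n → ℝ := star U *ᵥ x with hy
  have hyy : y ⬝ᵥ y = x ⬝ᵥ x := by
    calc y ⬝ᵥ y = (y ᵥ* star U) ⬝ᵥ x := by rw [hy, Matrix.dotProduct_mulVec]
    _ = ((star U)ᵀ *ᵥ y) ⬝ᵥ x := by rw [Matrix.mulVec_transpose]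
    _ = ((U * star U) *ᵥ x) ⬝ᵥ x := by rw [hUT, hy, Matrix.mulVec_mulVec]
    _ = x ⬝ᵥ x := by rw [hUU, Matrix.one_mulVec]
  have hQx : x ⬝ᵥ Q *ᵥ x = ∑ i, hQ.eigenvalues i * (y i * y i) := by
    conv_lhs => rw [hQ.spectral_theorem, Unitary.conjStarAlgAut_apply]
    rw [← Matrix.mulVec_mulVec, ← Matrix.mulVec_mulVec, Matrix.dotProduct_mulVec (A := U),
      ← Matrix.mulVec_transpose]
    rw [← hsU, ← hy]
    simp [dotProduct, Matrix.mulVec_diagonal, mul_comm, mul_left_comm, mul_assoc]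
  rw [hQx, ← hyy]
  have : μ * (y ⬝ᵥ y) = ∑ i, μ * (y i * y i) := by
    rw [dotProduct, Finset.mul_sum]
  rw [this]
  exact Finset.sum_le_sum fun i _ => mul_le_mul_of_nonneg_right (hμ i) (mul_self_nonneg _)

theorem top_eigenvalue_simple {V : Type*} [Fintype V] [DecidableEq V]
    (K : Finset (Finset V))
    (hK1 : ∀ x ∈ K, x.card = 1 ∨ x.card = 2)
    (hKc : ∀ x ∈ K, ∀ y ⊆ x, y.Nonempty → y ∈ K)
    (hE : ∃ x ∈ K, x.card = 2)
    (Γ : SimpleGraph {x // x ∈ K}) [DecidableRel Γ.Adj]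
    (hΓ : ∀ x y, Γ.Adj x y ↔ ((x : Finset V) ⊂ (y : Finset V) ∨ (y : Finset V) ⊂ (x : Finset V)))
    (hconn : Γ.Connected) :
    ∃ μ : ℝ,
      Module.End.HasEigenvalue (Matrix.toLin' (Γ.lapMatrix ℝ)) μ ∧
      (∀ ν : ℝ, Module.End.HasEigenvalue (Matrix.toLin' (Γ.lapMatrix ℝ)) ν → ν ≤ μ) ∧
      Module.finrank ℝ (Module.End.eigenspace (Matrix.toLin' (Γ.lapMatrix ℝ)) μ) = 1 := by
  classical
  obtain ⟨e, heK, he2⟩ := hE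
  haveI : Nonempty {x // x ∈ K} := ⟨⟨e, heK⟩⟩
  set L : Matrix {x // x ∈ K} {x // x ∈ K} ℝ := Γ.lapMatrix ℝ with hLdef
  set σ : {x // x ∈ K} → ℝ := fun u => if (u : Finset V).card = 1 then 1 else -1 with hσdef
  have hσ1 : ∀ u, σ u * σ u = 1 := by
    intro u; by_cases h : (u : Finset V).card = 1 <;> simp [hσdef, h]
  have hσ0 : ∀ u, σ u ≠ 0 := by
    intro u; by_cases h : (u : Finset V).card = 1 <;> simp [hσdef, h]
  have hadjσ : ∀ u v, Γ.Adj u v → σ u * σ v = -1 := by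
    intro u v h
    have key : ∀ a b : {x // x ∈ K}, (a : Finset V) ⊂ (b : Finset V) → σ a * σ b = -1 := by
      intro a b hab
      have hca := hK1 a a.2
      have hcb := hK1 b b.2
      have hlt : (a : Finset V).card < (b : Finset V).card := Finset.card_lt_card hab
      have ha1 : (a : Finset V).card = 1 := by omega
      have hb2 : ¬ (b : Finset V).card = 1 := by omega
      simp [hσdef, ha1, hb2]
    rcases (hΓ u v).1 h with h' | h'
    · exact key u v h'
    · rw [mul_comm]; exact key v u h'
  have hLsymm : L.IsSymm := Γ.isSymm_lapMatrix ℝ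
  have hLoff : ∀ u v, u ≠ v → L u v = if Γ.Adj u v then (-1 : ℝ) else 0 := by
    intro u v huv
    simp only [hLdef, SimpleGraph.lapMatrix, Matrix.sub_apply, SimpleGraph.degMatrix,
      Matrix.diagonal_apply_ne _ huv, SimpleGraph.adjMatrix_apply, zero_sub]
    split_ifs <;> norm_num
  have hLdiag : ∀ u, L u u = (Γ.degree u : ℝ) := by
    intro u
    simp [hLdef, SimpleGraph.lapMatrix, SimpleGraph.degMatrix, SimpleGraph.adjMatrix_apply]
  set Q : Matrix {x // x ∈ K} {x // x ∈ K} ℝ :=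
    Matrix.of (fun u v => σ u * σ v * L u v) with hQdef
  have hQsymm : Q.IsHermitian := by
    rw [Matrix.IsHermitian, Matrix.conjTranspose_eq_transpose_of_trivial]
    ext u v
    rw [Matrix.transpose_apply]
    simp only [hQdef, Matrix.of_apply]
    rw [hLsymm.apply u v]
    ring
  have hQnonneg : ∀ u v, 0 ≤ Q u v := by
    intro u v
    by_cases huv : u = v
    · subst huv
      simp only [hQdef, Matrix.of_apply]
      rw [hσ1, hLdiag, one_mul]
      positivity
    · simp only [hQdef, Matrix.of_apply]
      rw [hLoff u v huv]
      by_cases h : Γ.Adj u v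
      · rw [if_pos h, hadjσ u v h]; norm_num
      · rw [if_neg h]; simp
  have hQadj : ∀ u v, Γ.Adj u v → Q u v = 1 := by
    intro u v h
    have huv : u ≠ v := h.ne
    simp only [hQdef, Matrix.of_apply]
    rw [hLoff u v huv, if_pos h, hadjσ u v h]; norm_num
  -- transfer between L and Q
  have hQL : ∀ x : {x // x ∈ K} → ℝ,
      L *ᵥ (fun u => σ u * x u) = fun u => σ u * ((Q *ᵥ x) u) := by
    intro x
    funext u
    simp only [Matrix.mulVec, dotProduct, hQdef, Matrix.of_apply, Finset.mul_sum]
    apply Finset.sum_congr rfl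
    intro v _
    linear_combination (-(σ v * L u v * x v)) * hσ1 u
  have htoQ : ∀ (x : {x // x ∈ K} → ℝ) (μ' : ℝ), L *ᵥ x = μ' • x →
      Q *ᵥ (fun u => σ u * x u) = μ' • (fun u => σ u * x u) := by
    intro x μ' hx
    set y : {x // x ∈ K} → ℝ := fun u => σ u * x u with hy
    have hxy : x = fun u => σ u * y u := by
      funext u; rw [hy]; simp only; rw [← mul_assoc, hσ1, one_mul]
    have h2 : L *ᵥ (fun u => σ u * y u) = μ' • x := by rw [← hxy]; exact hx
    rw [hQL y] at h2
    funext u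
    have h3 := congrFun h2 u
    simp only [Pi.smul_apply, smul_eq_mul] at h3 ⊢
    have h4 : x u = σ u * y u := congrFun hxy u
    rw [h4] at h3
    have h5 : σ u * ((Q *ᵥ y) u) = σ u * (μ' * y u) := by rw [h3]; ring
    exact mul_left_cancel₀ (hσ0 u) h5
  -- the largest eigenvalue of Q
  obtain ⟨i₀, -, hi₀⟩ := Finset.exists_max_image Finset.univ hQsymm.eigenvalues
    ⟨Classical.arbitrary _, Finset.mem_univ _⟩
  set μ : ℝ := hQsymm.eigenvalues i₀ with hμdef
  have hμmax : ∀ i, hQsymm.eigenvalues i ≤ μ := fun i => hi₀ i (Finset.mem_univ _)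
  have hray : ∀ x, x ⬝ᵥ Q *ᵥ x ≤ μ * (x ⬝ᵥ x) := fun x => rayleigh_bound' hQsymm hμmax x
  -- μ • 1 - Q is positive semidefinite
  have hPSD : (μ • (1 : Matrix {x // x ∈ K} {x // x ∈ K} ℝ) - Q).PosSemidef := by
    refine Matrix.PosSemidef.of_dotProduct_mulVec_nonneg ?_ ?_
    · apply Matrix.IsHermitian.sub
      · simp [Matrix.IsHermitian]
      · exact hQsymm
    · intro x
      have h := hray x
      simp only [star_trivial, Matrix.sub_mulVec, dotProduct_sub,
        Matrix.smul_mulVec, Matrix.one_mulVec, dotProduct_smul, smul_eq_mul]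
      linarith
  have hzero : ∀ x : {x // x ∈ K} → ℝ, x ⬝ᵥ Q *ᵥ x = μ * (x ⬝ᵥ x) → Q *ᵥ x = μ • x := by
    intro x hx
    have h0 : star x ⬝ᵥ (μ • (1 : Matrix {x // x ∈ K} {x // x ∈ K} ℝ) - Q) *ᵥ x = 0 := by
      rw [star_trivial]
      simp only [Matrix.sub_mulVec, dotProduct_sub, Matrix.smul_mulVec,
        Matrix.one_mulVec, dotProduct_smul, smul_eq_mul]
      linarith
    have h1 := (hPSD.dotProduct_mulVec_zero_iff x).1 h0
    rw [Matrix.sub_mulVec, sub_eq_zero, Matrix.smul_mulVec, Matrix.one_mulVec] at h1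
    exact h1.symm
  -- eigenvectors of Q at μ can be replaced by their absolute values
  have habs : ∀ f : {x // x ∈ K} → ℝ, Q *ᵥ f = μ • f →
      Q *ᵥ (fun u => |f u|) = μ • (fun u => |f u|) := by
    intro f hf
    set g : {x // x ∈ K} → ℝ := fun u => |f u| with hg
    have hgg : g ⬝ᵥ g = f ⬝ᵥ f := by
      simp [dotProduct, hg, abs_mul_abs_self]
    have hfQf : f ⬝ᵥ Q *ᵥ f = μ * (f ⬝ᵥ f) := by
      rw [hf, dotProduct_smul, smul_eq_mul]
    have hle : f ⬝ᵥ Q *ᵥ f ≤ g ⬝ᵥ Q *ᵥ g := by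
      simp only [dotProduct, Matrix.mulVec, Finset.mul_sum]
      rw [Finset.sum_comm]
      conv_rhs => rw [Finset.sum_comm]
      apply Finset.sum_le_sum
      intro v _
      apply Finset.sum_le_sum
      intro u _
      calc f u * (Q u v * f v) ≤ |f u * (Q u v * f v)| := le_abs_self _
      _ = g u * (Q u v * g v) := by
          rw [abs_mul, abs_mul, abs_of_nonneg (hQnonneg u v), hg]
    have h2 : g ⬝ᵥ Q *ᵥ g ≤ μ * (g ⬝ᵥ g) := hray g
    exact hzero g (le_antisymm h2 (by rw [hgg, ← hfQf]; exact hle))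
  -- a nonnegative eigenvector of Q at μ has no zero entry
  have hpos : ∀ g : {x // x ∈ K} → ℝ, Q *ᵥ g = μ • g → (∀ u, 0 ≤ g u) → g ≠ 0 →
      ∀ u, g u ≠ 0 := by
    intro g hQg hg0 hgne u
    have hclosed : ∀ a b, Γ.Adj a b → g a = 0 → g b = 0 := by
      intro a b hab ha
      have h1 : (Q *ᵥ g) a = 0 := by rw [hQg]; simp [ha]
      have h2 : ∑ v, Q a v * g v = 0 := by
        rw [← h1]; rfl
      have h3 : ∀ v ∈ Finset.univ, 0 ≤ Q a v * g v :=
        fun v _ => mul_nonneg (hQnonneg a v) (hg0 v)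
      have h4 := (Finset.sum_eq_zero_iff_of_nonneg h3).1 h2 b (Finset.mem_univ b)
      rw [hQadj a b hab, one_mul] at h4
      exact h4
    obtain ⟨w, hw⟩ : ∃ w, g w ≠ 0 := by
      by_contra hc
      push_neg at hc
      exact hgne (funext hc)
    intro hu
    have hwalk : ∀ {a b : {x // x ∈ K}} (_ : Γ.Walk a b), g a = 0 → g b = 0 := by
      intro a b p
      induction p with
      | nil => exact id
      | cons h q ih => intro ha; exact ih (hclosed _ _ h ha)
    exact hw (hwalk ((hconn u w).some) hu)
  -- every eigenvector of Q at μ has no zero entry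
  have hnonzero : ∀ f : {x // x ∈ K} → ℝ, Q *ᵥ f = μ • f → f ≠ 0 → ∀ u, f u ≠ 0 := by
    intro f hf hfne u
    have h1 := habs f hf
    have h2 : (fun u => |f u|) ≠ 0 := by
      intro hc
      apply hfne
      funext v
      have := congrFun hc v
      simpa using this
    have := hpos _ h1 (fun v => abs_nonneg _) h2 u
    exact fun h => this (by simp [h])
  -- an eigenvector of Q at μ
  set v0 : {x // x ∈ K} → ℝ := ⇑(hQsymm.eigenvectorBasis i₀) with hv0def
  have hv0 : Q *ᵥ v0 = μ • v0 := hQsymm.mulVec_eigenvectorBasis i₀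
  have hv0ne : v0 ≠ 0 := by
    intro hc
    have h1 := hQsymm.eigenvectorBasis.orthonormal.ne_zero i₀
    apply h1
    ext u
    exact congrFun hc u
  set w0 : {x // x ∈ K} → ℝ := fun u => σ u * v0 u with hw0def
  have hw0 : L *ᵥ w0 = μ • w0 := by
    rw [hw0def, hQL v0, hv0]
    funext u
    simp only [Pi.smul_apply, smul_eq_mul]
    ring
  have hw0ne : w0 ≠ 0 := by
    intro hc
    apply hv0ne
    funext u
    have h1 := congrFun hc u
    simp only [hw0def, Pi.zero_apply] at h1
    rcases mul_eq_zero.1 h1 with h | h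
    · exact absurd h (hσ0 u)
    · exact h
  have hw0mem : w0 ∈ Module.End.eigenspace (Matrix.toLin' L) μ := by
    rw [Module.End.mem_eigenspace_iff, Matrix.toLin'_apply]
    exact hw0
  refine ⟨μ, ?_, ?_, ?_⟩
  · exact Module.End.hasEigenvalue_of_hasEigenvector ⟨hw0mem, hw0ne⟩
  · intro ν hν
    obtain ⟨x, hx⟩ := hν.exists_hasEigenvector
    have hLx : L *ᵥ x = ν • x := by
      rw [← Matrix.toLin'_apply]
      exact hx.apply_eq_smul
    have hQy := htoQ x ν hLx
    set y : {x // x ∈ K} → ℝ := fun u => σ u * x u with hy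
    have hyne : y ≠ 0 := by
      intro hc
      apply hx.2
      funext u
      have h1 := congrFun hc u
      simp only [hy, Pi.zero_apply] at h1
      rcases mul_eq_zero.1 h1 with h | h
      · exact absurd h (hσ0 u)
      · exact h
    have hyy : 0 < y ⬝ᵥ y := by
      obtain ⟨u, hu⟩ : ∃ u, y u ≠ 0 := by
        by_contra hc; push_neg at hc; exact hyne (funext hc)
      apply Finset.sum_pos'
      · exact fun i _ => mul_self_nonneg _
      · exact ⟨u, Finset.mem_univ u, mul_self_pos.mpr hu⟩
    have h1 : ν * (y ⬝ᵥ y) ≤ μ * (y ⬝ᵥ y) := by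
      have h2 : y ⬝ᵥ Q *ᵥ y = ν * (y ⬝ᵥ y) := by
        rw [hQy, dotProduct_smul, smul_eq_mul]
      rw [← h2]
      exact hray y
    exact le_of_mul_le_mul_right h1 hyy
  · -- the eigenspace is one-dimensional
    have hu0 : ∀ u, v0 u ≠ 0 := hnonzero v0 hv0 hv0ne
    refine finrank_eq_one (⟨w0, hw0mem⟩ : Module.End.eigenspace (Matrix.toLin' L) μ)
      (by simp [Submodule.mk_eq_zero]; exact hw0ne) ?_
    rintro ⟨w, hw⟩
    have hLw : L *ᵥ w = μ • w := by
      rw [← Matrix.toLin'_apply]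
      exact Module.End.mem_eigenspace_iff.1 hw
    by_cases hwz : w = 0
    · exact ⟨0, by simp [Subtype.ext_iff, hwz]⟩
    · set y : {x // x ∈ K} → ℝ := fun u => σ u * w u with hy
      have hQy := htoQ w μ hLw
      let u0 : {x // x ∈ K} := Classical.arbitrary _
      set c : ℝ := y u0 / v0 u0 with hc
      set z : {x // x ∈ K} → ℝ := fun u => y u - c * v0 u with hz
      have hQz : Q *ᵥ z = μ • z := by
        have h1 : z = y - c • v0 := by funext u; simp [hz]
        rw [h1, Matrix.mulVec_sub, Matrix.mulVec_smul, hQy, hv0]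
        funext u
        simp only [Pi.sub_apply, Pi.smul_apply, smul_eq_mul]
        ring
      have hzu0 : z u0 = 0 := by
        simp only [hz, hc]
        rw [div_mul_cancel₀ _ (hu0 u0)]
        ring
      have hzzero : z = 0 := by
        by_contra hzn
        exact hnonzero z hQz hzn u0 hzu0
      refine ⟨c, ?_⟩
      apply Subtype.ext
      show c • w0 = w
      funext u
      have h1 : y u = c * v0 u := by
        have := congrFun hzzero u
        simp only [hz, Pi.zero_apply] at this
        linarith
      have h2 : w u = σ u * y u := by
        simp only [hy]
        rw [← mul_assoc, hσ1, one_mul]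
      simp only [Pi.smul_apply, smul_eq_mul, hw0def]
      rw [h2, h1]
      ring
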